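/- (Distributed Weighted Off-By-One IQC, Lemma 2.) Let d, N ∈ ℕ and for each k = 1,…,N let J_k : ℝ^d → ℝ be differentiable, m_k-strongly convex with L_k-Lipschitz gradient (0 < m_k ≤ L_k). Let 0 ≤ ρ̄ ≤ ρ ≤ 1 with ρ > 0. Fix reference points s_1,…,s_N ∈ ℝ^d and let y_k : ℕ → ℝ^d be arbitrary sequences. Define for each k and t ∈ ℕ the error quantities ỹ_k^t := y_k^t − s_k and ũ_k^t := ∇J_k(y_k^t) − ∇J_k(s_k), and define the filter states ψ̃_k : ℕ → ℝ^d by ψ̃_k^0 = 0 and ψ̃_k^{t+1} = ũ_k^t − L_k ỹ_k^t. Then for every T ∈ ℕ: Σ_{t=0}^{T} ρ^{−2t} Σ_{k=1}^{N} ⟨ρ̄²·ψ̃_k^t + L_k ỹ_k^t − ũ_k^t, ũ_k^t − m_k ỹ_k^t⟩ ≥ 0. -/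

import Mathlib

open scoped RealInnerProductSpace

section Aux

variable {E : Type*} [NormedAddCommGroup E] [InnerProductSpace ℝ E] [CompleteSpace E]

lemma descent_lemma (f : E → ℝ) (L : ℝ) (hL : 0 ≤ L) (hd : Differentiable ℝ f)
    (hl : ∀ a b, ‖gradient f a - gradient f b‖ ≤ L * ‖a - b‖) (a b : E) :
    f b ≤ f a + ⟪gradient f a, b - a⟫ + L / 2 * ‖b - a‖ ^ 2 := by
  set v := b - a with hv
  -- derivative of the path
  have hpath : ∀ t : ℝ, HasDerivAt (fun t : ℝ => f (a + t • v))
      ⟪gradient f (a + t • v), v⟫ t := by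
    intro t
    have hc : HasDerivAt (fun t : ℝ => a + t • v) v t := by
      simpa using (hasDerivAt_id t).smul_const v |>.const_add a
    have hg : HasFDerivAt f (InnerProductSpace.toDual ℝ E (gradient f (a + t • v))) (a + t • v) :=
      ((hd _).hasGradientAt).hasFDerivAt
    simpa [Function.comp_def] using hg.comp_hasDerivAt t hc
  -- continuity of gradient
  have hgc : Continuous fun x : E => gradient f x := by
    rw [Metric.continuous_iff]
    intro x ε hε
    rcases eq_or_lt_of_le hL with h0 | hLpos
    · exact ⟨1, one_pos, fun y _ => by
        have := hl y x
        rw [← h0] at this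
        simp only [zero_mul] at this
        have : gradient f y = gradient f x := by
          have := norm_sub_eq_zero_iff.mp (le_antisymm this (norm_nonneg _))
          exact this
        simpa [this, dist_self] using hε⟩
    · refine ⟨ε / L, by positivity, fun y hy => ?_⟩
      rw [dist_eq_norm] at hy ⊢
      calc ‖gradient f y - gradient f x‖ ≤ L * ‖y - x‖ := hl y x
        _ < L * (ε / L) := mul_lt_mul_of_pos_left hy hLpos
        _ = ε := by field_simp
  have hcont : Continuous fun t : ℝ => ⟪gradient f (a + t • v), v⟫ := by
    exact (hgc.comp (by continuity)).inner continuous_const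
  have hftc : ∫ t in (0:ℝ)..1, ⟪gradient f (a + t • v), v⟫
      = f (a + (1:ℝ) • v) - f (a + (0:ℝ) • v) := by
    exact intervalIntegral.integral_eq_sub_of_hasDerivAt
      (fun t _ => hpath t) (hcont.intervalIntegrable 0 1)
  have hfb : f b - f a = ∫ t in (0:ℝ)..1, ⟪gradient f (a + t • v), v⟫ := by
    rw [hftc]; simp [hv]
  -- bound
  have hbnd : ∫ t in (0:ℝ)..1, ⟪gradient f (a + t • v), v⟫
      ≤ ∫ t in (0:ℝ)..1, (⟪gradient f a, v⟫ + L * t * ‖v‖ ^ 2) := by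
    apply intervalIntegral.integral_mono_on (by norm_num)
      (hcont.intervalIntegrable 0 1)
      (((continuous_const.add (((continuous_const.mul continuous_id').mul continuous_const))).intervalIntegrable 0 1))
    intro t ht
    rcases Set.mem_Icc.mp ht with ⟨ht0, ht1⟩
    have h1 : ⟪gradient f (a + t • v), v⟫ - ⟪gradient f a, v⟫
        = ⟪gradient f (a + t • v) - gradient f a, v⟫ := by
      rw [inner_sub_left]
    have h2 : ⟪gradient f (a + t • v) - gradient f a, v⟫ ≤ L * t * ‖v‖ ^ 2 := by
      calc ⟪gradient f (a + t • v) - gradient f a, v⟫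
          ≤ ‖gradient f (a + t • v) - gradient f a‖ * ‖v‖ := real_inner_le_norm _ _
        _ ≤ (L * ‖(a + t • v) - a‖) * ‖v‖ := by
            exact mul_le_mul_of_nonneg_right (hl _ _) (norm_nonneg _)
        _ = L * t * ‖v‖ ^ 2 := by
            simp [norm_smul, abs_of_nonneg ht0]; ring
    simp only [Pi.add_apply, Pi.mul_apply]
    linarith
  have hint : ∫ t in (0:ℝ)..1, (⟪gradient f a, v⟫ + L * t * ‖v‖ ^ 2)
      = ⟪gradient f a, v⟫ + L / 2 * ‖v‖ ^ 2 := by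
    rw [intervalIntegral.integral_add (f := fun _ => ⟪gradient f a, v⟫) (g := fun t => L * t * ‖v‖ ^ 2)
      (continuous_const.intervalIntegrable 0 1)
      (((continuous_const.mul continuous_id').mul continuous_const).intervalIntegrable 0 1)]
    simp only [intervalIntegral.integral_const]
    have : ∫ t in (0:ℝ)..1, L * t * ‖v‖ ^ 2 = L / 2 * ‖v‖ ^ 2 := by
      have : (fun t : ℝ => L * t * ‖v‖ ^ 2) = fun t : ℝ => (L * ‖v‖ ^ 2) * t := by
        funext t; ring
      rw [this, intervalIntegral.integral_const_mul, integral_id]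
      ring
    rw [this]; simp
  linarith [hbnd.trans_eq hint, hfb.ge, hfb.le]

lemma starJ (f : E → ℝ) (m L : ℝ) (hm : 0 < m) (hmL : m < L) (hd : Differentiable ℝ f)
    (hstrong : ∀ a b, f b ≥ f a + ⟪gradient f a, b - a⟫ + m / 2 * ‖b - a‖ ^ 2)
    (hlip : ∀ a b, ‖gradient f a - gradient f b‖ ≤ L * ‖a - b‖) (a b : E) :
    ‖(gradient f b - gradient f a) - m • (b - a)‖ ^ 2
      ≤ 2 * (L - m) * (f b - f a - ⟪gradient f a, b - a⟫ - m / 2 * ‖b - a‖ ^ 2) := by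
  have hLm : (0:ℝ) < L - m := by linarith
  set w : E := (gradient f b - gradient f a) - m • (b - a) with hw
  set c : ℝ := (L - m)⁻¹ with hcdef
  have hc : c * (L - m) = 1 := inv_mul_cancel₀ (ne_of_gt hLm)
  have hcpos : 0 < c := inv_pos.mpr hLm
  set x : E := b - c • w with hx
  have h1 := hstrong a x
  have h2 := descent_lemma f L (by linarith) hd hlip b x
  have hxa : x - a = (b - a) - c • w := by rw [hx]; abel
  have hxb : x - b = -(c • w) := by rw [hx]; abel
  have e1 : ⟪gradient f a, x - a⟫ = ⟪gradient f a, b - a⟫ - c * ⟪gradient f a, w⟫ := by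
    rw [hxa, inner_sub_right, real_inner_smul_right]
  have e2 : ‖x - a‖ ^ 2 = ‖b - a‖ ^ 2 - 2 * (c * ⟪b - a, w⟫) + c ^ 2 * ‖w‖ ^ 2 := by
    rw [hxa, @norm_sub_sq_real, real_inner_smul_right, norm_smul]
    rw [Real.norm_eq_abs, abs_of_pos hcpos]
    ring
  have e3 : ⟪gradient f b, x - b⟫ = -(c * ⟪gradient f b, w⟫) := by
    rw [hxb, inner_neg_right, real_inner_smul_right]
  have e4 : ‖x - b‖ ^ 2 = c ^ 2 * ‖w‖ ^ 2 := by
    rw [hxb, norm_neg, norm_smul, Real.norm_eq_abs, abs_of_pos hcpos]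
    ring
  have e5 : ⟪gradient f b, w⟫ - ⟪gradient f a, w⟫ - m * ⟪b - a, w⟫ = ‖w‖ ^ 2 := by
    rw [← real_inner_self_eq_norm_sq]
    nth_rewrite 4 [hw]
    simp only [inner_sub_left, real_inner_smul_left]
  have e5c : c * ⟪gradient f b, w⟫ - c * ⟪gradient f a, w⟫ - c * (m * ⟪b - a, w⟫)
      = c * ‖w‖ ^ 2 := by rw [← e5]; ring
  have hLc : L * (c ^ 2 * ‖w‖ ^ 2) - m * (c ^ 2 * ‖w‖ ^ 2) = c * ‖w‖ ^ 2 := by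
    have : (L - m) * c ^ 2 = c := by
      rw [pow_two, ← mul_assoc]
      rw [mul_comm (L - m) c, hc, one_mul]
    nlinarith [this]
  have key : c / 2 * ‖w‖ ^ 2 ≤ f b - f a - ⟪gradient f a, b - a⟫ - m / 2 * ‖b - a‖ ^ 2 := by
    rw [e1, e2] at h1
    rw [e3, e4] at h2
    nlinarith [h1, h2, e5c, hLc]
  calc ‖w‖ ^ 2 = 2 * (L - m) * (c / 2 * ‖w‖ ^ 2) := by
        have h : 2 * (L - m) * (c / 2 * ‖w‖ ^ 2) = ((L - m) * c) * ‖w‖ ^ 2 := by ring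
        rw [h, mul_comm (L - m) c, hc, one_mul]
    _ ≤ 2 * (L - m) * (f b - f a - ⟪gradient f a, b - a⟫ - m / 2 * ‖b - a‖ ^ 2) := by
        apply mul_le_mul_of_nonneg_left key (by linarith)

section
variable (f : E → ℝ) (m L : ℝ) (hm : 0 < m) (hmL : m < L) (hd : Differentiable ℝ f)
    (hstrong : ∀ a b, f b ≥ f a + ⟪gradient f a, b - a⟫ + m / 2 * ‖b - a‖ ^ 2)
    (hlip : ∀ a b, ‖gradient f a - gradient f b‖ ≤ L * ‖a - b‖)

include hm hmL hd hstrong hlip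

lemma ineq_I (p s : E) :
    ‖(gradient f p - gradient f s) - m • (p - s)‖ ^ 2
      ≤ 2 * (L - m) * (⟪(gradient f p - gradient f s) - m • (p - s), p - s⟫
          - (f p - f s - ⟪gradient f s, p - s⟫ - m / 2 * ‖p - s‖ ^ 2)) := by
  have h := starJ f m L hm hmL hd hstrong hlip p s
  have hL : (gradient f s - gradient f p) - m • (s - p)
      = -((gradient f p - gradient f s) - m • (p - s)) := by module
  rw [hL, norm_neg] at h
  refine h.trans (le_of_eq ?_)
  congr 1
  have hn : ‖s - p‖ = ‖p - s‖ := norm_sub_rev s p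
  rw [hn]
  simp only [inner_sub_left, inner_sub_right, real_inner_smul_left, real_inner_smul_right,
    ← real_inner_self_eq_norm_sq, real_inner_comm]
  ring

lemma ineq_III (p q s : E) :
    ‖((gradient f p - gradient f s) - m • (p - s))
        - ((gradient f q - gradient f s) - m • (q - s))‖ ^ 2
      ≤ 2 * (L - m) * (⟪(gradient f p - gradient f s) - m • (p - s), (p - s) - (q - s)⟫
          - ((f p - f s - ⟪gradient f s, p - s⟫ - m / 2 * ‖p - s‖ ^ 2)
             - (f q - f s - ⟪gradient f s, q - s⟫ - m / 2 * ‖q - s‖ ^ 2))) := by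
  have h := starJ f m L hm hmL hd hstrong hlip p q
  have hL : (gradient f q - gradient f p) - m • (q - p)
      = -(((gradient f p - gradient f s) - m • (p - s))
           - ((gradient f q - gradient f s) - m • (q - s))) := by module
  rw [hL, norm_neg] at h
  refine h.trans (le_of_eq ?_)
  congr 1
  have hn : ‖q - p‖ ^ 2 = ‖p - q‖ ^ 2 := by rw [norm_sub_rev]
  rw [hn]
  simp only [inner_sub_left, inner_sub_right, real_inner_smul_left, real_inner_smul_right,
    ← real_inner_self_eq_norm_sq, real_inner_comm]
  ring

end

lemma weighted_sum_nonneg (ρbar ρ : ℝ) (hρbar : 0 ≤ ρbar) (hρbarρ : ρbar ≤ ρ) (hρ : 0 < ρ)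
    (term V : ℕ → ℝ) (hV : ∀ t, 0 ≤ V t) (h0 : V 0 ≤ term 0)
    (hS : ∀ t, V (t + 1) - ρbar ^ 2 * V t ≤ term (t + 1)) (T : ℕ) :
    0 ≤ ∑ t ∈ Finset.range (T + 1), (ρ ^ (2 * t))⁻¹ * term t := by
  have key : ∀ T : ℕ, (ρ ^ (2 * T))⁻¹ * V T
      ≤ ∑ t ∈ Finset.range (T + 1), (ρ ^ (2 * t))⁻¹ * term t := by
    intro T
    induction T with
    | zero => simpa using h0
    | succ n ih =>
      rw [Finset.sum_range_succ]
      have hwpos : (0:ℝ) < (ρ ^ (2 * (n + 1)))⁻¹ := by positivity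
      have hstep : (ρ ^ (2 * (n + 1)))⁻¹ * (V (n + 1) - ρbar ^ 2 * V n)
          ≤ (ρ ^ (2 * (n + 1)))⁻¹ * term (n + 1) :=
        mul_le_mul_of_nonneg_left (hS n) hwpos.le
      have hcmp : (ρ ^ (2 * (n + 1)))⁻¹ * (ρbar ^ 2 * V n) ≤ (ρ ^ (2 * n))⁻¹ * V n := by
        have hpow : ρ ^ (2 * (n + 1)) = ρ ^ (2 * n) * ρ ^ 2 := by
          rw [← pow_add]; ring_nf
        rw [hpow, mul_inv, mul_assoc]
        refine mul_le_mul_of_nonneg_left ?_ (by positivity)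
        have h1 : ρbar ^ 2 ≤ ρ ^ 2 := by nlinarith
        have h2 : (ρ ^ 2)⁻¹ * (ρbar ^ 2 * V n) ≤ 1 * V n := by
          rw [← mul_assoc]
          refine mul_le_mul_of_nonneg_right ?_ (hV n)
          rw [inv_mul_le_iff₀ (by positivity)]
          linarith
        linarith [h2]
      nlinarith [hstep, ih, hcmp, mul_le_mul_of_nonneg_left (hS n) hwpos.le]
  exact le_trans (mul_nonneg (by positivity) (hV T)) (key T)

lemma perk (f : E → ℝ) (m L : ℝ) (hm : 0 < m) (hmL : m ≤ L) (hd : Differentiable ℝ f)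
    (hstrong : ∀ a b, f b ≥ f a + ⟪gradient f a, b - a⟫ + m / 2 * ‖b - a‖ ^ 2)
    (hlip : ∀ a b, ‖gradient f a - gradient f b‖ ≤ L * ‖a - b‖)
    (ρbar ρ : ℝ) (hρbar : 0 ≤ ρbar) (hρbarρ : ρbar ≤ ρ) (hρ1 : ρ ≤ 1) (hρ : 0 < ρ)
    (s : E) (y ψ : ℕ → E) (hψ0 : ψ 0 = 0)
    (hψ : ∀ t, ψ (t + 1) = (gradient f (y t) - gradient f s) - L • (y t - s)) (T : ℕ) :
    0 ≤ ∑ t ∈ Finset.range (T + 1), (ρ ^ (2 * t))⁻¹ *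
      ⟪ρbar ^ 2 • ψ t + L • (y t - s) - (gradient f (y t) - gradient f s),
        (gradient f (y t) - gradient f s) - m • (y t - s)⟫ := by
  rcases eq_or_lt_of_le hmL with hEq | hlt
  · -- degenerate case m = L : the second component vanishes
    subst hEq
    have he0 : ∀ p : E, (gradient f p - gradient f s) - m • (p - s) = 0 := by
      intro p
      have h1 := hstrong s p
      have h2 := hstrong p s
      have hl := hlip p s
      have e1 : ⟪gradient f p, s - p⟫ = -⟪gradient f p, p - s⟫ := by
        rw [← inner_neg_right]; congr 1; abel
      have e2 : ‖s - p‖ = ‖p - s‖ := norm_sub_rev s p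
      rw [e1, e2] at h2
      have hmono : m * ‖p - s‖ ^ 2 ≤ ⟪gradient f p, p - s⟫ - ⟪gradient f s, p - s⟫ := by
        linarith
      have hsq : ‖gradient f p - gradient f s‖ ^ 2 ≤ (m * ‖p - s‖) ^ 2 :=
        pow_le_pow_left₀ (norm_nonneg _) hl 2
      have hfin : ‖(gradient f p - gradient f s) - m • (p - s)‖ ^ 2 ≤ 0 := by
        rw [@norm_sub_sq_real, real_inner_smul_right, norm_smul, Real.norm_eq_abs,
          abs_of_pos hm, inner_sub_left]
        nlinarith [mul_le_mul_of_nonneg_left hmono hm.le, norm_nonneg (p - s)]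
      have := le_antisymm hfin (sq_nonneg _)
      have hz : ‖(gradient f p - gradient f s) - m • (p - s)‖ = 0 :=
        (pow_eq_zero_iff two_ne_zero).mp this
      exact norm_eq_zero.mp hz
    refine Finset.sum_nonneg fun t _ => ?_
    rw [he0 (y t), inner_zero_right, mul_zero]
  · -- main case m < L
    refine weighted_sum_nonneg ρbar ρ hρbar hρbarρ hρ _
      (fun t => (L - m) * (f (y t) - f s - ⟪gradient f s, y t - s⟫ - m / 2 * ‖y t - s‖ ^ 2)
        - ‖(gradient f (y t) - gradient f s) - m • (y t - s)‖ ^ 2 / 2) ?_ ?_ ?_ T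
    · -- V nonneg
      intro t
      have h := starJ f m L hm hlt hd hstrong hlip s (y t)
      linarith
    · -- base case
      rw [hψ0, smul_zero, zero_add]
      have hexp0 : ⟪L • (y 0 - s) - (gradient f (y 0) - gradient f s),
            (gradient f (y 0) - gradient f s) - m • (y 0 - s)⟫
          = (L - m) * ⟪(gradient f (y 0) - gradient f s) - m • (y 0 - s), y 0 - s⟫
            - ‖(gradient f (y 0) - gradient f s) - m • (y 0 - s)‖ ^ 2 := by
        simp only [inner_add_left, inner_sub_left, inner_sub_right, real_inner_smul_left,
          real_inner_smul_right, ← real_inner_self_eq_norm_sq, real_inner_comm]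
        ring
      rw [hexp0]
      have hI := ineq_I f m L hm hlt hd hstrong hlip (y 0) s
      linarith
    · -- inductive step
      intro t
      rw [hψ t]
      have hexp : ⟪ρbar ^ 2 • ((gradient f (y t) - gradient f s) - L • (y t - s))
              + L • (y (t + 1) - s) - (gradient f (y (t + 1)) - gradient f s),
            (gradient f (y (t + 1)) - gradient f s) - m • (y (t + 1) - s)⟫
          = ρbar ^ 2 * ⟪(gradient f (y (t + 1)) - gradient f s) - m • (y (t + 1) - s),
                (gradient f (y t) - gradient f s) - m • (y t - s)⟫
            - ρbar ^ 2 * (L - m) * ⟪(gradient f (y (t + 1)) - gradient f s)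
                - m • (y (t + 1) - s), y t - s⟫
            + (L - m) * ⟪(gradient f (y (t + 1)) - gradient f s)
                - m • (y (t + 1) - s), y (t + 1) - s⟫
            - ‖(gradient f (y (t + 1)) - gradient f s) - m • (y (t + 1) - s)‖ ^ 2 := by
        simp only [inner_add_left, inner_sub_left, inner_sub_right, real_inner_smul_left,
          real_inner_smul_right, ← real_inner_self_eq_norm_sq, real_inner_comm]
        ring
      rw [hexp]
      have hI := ineq_I f m L hm hlt hd hstrong hlip (y (t + 1)) s
      have hIII := ineq_III f m L hm hlt hd hstrong hlip (y (t + 1)) (y t) s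
      rw [inner_sub_right] at hIII
      rw [@norm_sub_sq_real] at hIII
      have hb0 : (0:ℝ) ≤ ρbar ^ 2 := sq_nonneg _
      have hb1 : ρbar ^ 2 ≤ 1 := by nlinarith
      nlinarith [mul_le_mul_of_nonneg_left hIII hb0,
        mul_le_mul_of_nonneg_left hI (by linarith : (0:ℝ) ≤ 1 - ρbar ^ 2)]

end Aux

/-- **Lemma 2 (Distributed Weighted Off-By-One IQC).**
Let each `J k : ℝ^d → ℝ` be differentiable, `m k`-strongly convex with
`L k`-Lipschitz gradient (`0 < m k ≤ L k`), and let `0 ≤ ρ̄ ≤ ρ ≤ 1`, `ρ > 0`.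
Fix reference points `s k`, let `y k : ℕ → ℝ^d` be arbitrary sequences, set
`ỹ k t = y k t − s k`, `ũ k t = ∇J k (y k t) − ∇J k (s k)`, and let the filter
states satisfy `ψ̃ k 0 = 0`, `ψ̃ k (t+1) = ũ k t − L k • ỹ k t`. Then for every
horizon `T`, the `ρ`-weighted partial sums
`∑_{t=0}^{T} ρ^{−2t} ∑_k ⟨ρ̄² ψ̃ k t + L k ỹ k t − ũ k t, ũ k t − m k ỹ k t⟩`
are nonnegative (the `ρ`-hard IQC). -/
theorem distributed_weighted_off_by_one_IQC
    (d N : ℕ) (J : Fin N → EuclideanSpace ℝ (Fin d) → ℝ) (m L : Fin N → ℝ)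
    (hm : ∀ k, 0 < m k) (hmL : ∀ k, m k ≤ L k)
    (hdiff : ∀ k, Differentiable ℝ (J k))
    (hstrong : ∀ k a b, J k b ≥ J k a + ⟪gradient (J k) a, b - a⟫ + m k / 2 * ‖b - a‖ ^ 2)
    (hlip : ∀ k a b, ‖gradient (J k) a - gradient (J k) b‖ ≤ L k * ‖a - b‖)
    (ρbar ρ : ℝ) (hρbar : 0 ≤ ρbar) (hρbarρ : ρbar ≤ ρ) (hρ1 : ρ ≤ 1) (hρ : 0 < ρ)
    (s : Fin N → EuclideanSpace ℝ (Fin d))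
    (y : Fin N → ℕ → EuclideanSpace ℝ (Fin d))
    (ψ : Fin N → ℕ → EuclideanSpace ℝ (Fin d))
    (hψ0 : ∀ k, ψ k 0 = 0)
    (hψ : ∀ k t, ψ k (t + 1) =
      (gradient (J k) (y k t) - gradient (J k) (s k)) - L k • (y k t - s k)) :
    ∀ T : ℕ, 0 ≤ ∑ t ∈ Finset.range (T + 1), (ρ ^ (2 * t))⁻¹ *
      ∑ k, ⟪ρbar ^ 2 • ψ k t + L k • (y k t - s k)
              - (gradient (J k) (y k t) - gradient (J k) (s k)),
            (gradient (J k) (y k t) - gradient (J k) (s k)) - m k • (y k t - s k)⟫ := by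
  intro T
  simp_rw [Finset.mul_sum]
  rw [Finset.sum_comm]
  refine Finset.sum_nonneg fun k _ => ?_
  exact perk (J k) (m k) (L k) (hm k) (hmL k) (hdiff k) (hstrong k) (hlip k)
    ρbar ρ hρbar hρbarρ hρ1 hρ (s k) (y k) (ψ k) (hψ0 k) (hψ k) T
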